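/- For integers N ≥ 1, define φ_N = −∑_{k=1}^N log( Γ(k)² / ( Γ(k − 1/2) Γ(k + 1/2) ) ) and let C = −(1/4) ∫_0^∞ (1/t)( e^{−4t} − 1/cosh²(t) ) dt. Then lim_{N→∞} N² ( φ_N − (1/4) log N − C ) = 1/64. -/

import Mathlib

open Real MeasureTheory Finset Filter Set Topology

namespace Stmt16


lemma continuous_tanh : Continuous Real.tanh := by
  have : Real.tanh = fun x => Real.sinh x / Real.cosh x := funext Real.tanh_eq_sinh_div_cosh
  rw [this]
  exact Real.continuous_sinh.div Real.continuous_cosh fun x => (Real.cosh_pos x).ne'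

lemma tanh_nonneg {x : ℝ} (hx : 0 ≤ x) : 0 ≤ Real.tanh x := by
  rw [Real.tanh_eq_sinh_div_cosh]
  exact div_nonneg (by simpa using Real.sinh_le_sinh.2 hx) (Real.cosh_pos x).le

lemma tanh_le_one (x : ℝ) : Real.tanh x ≤ 1 := by
  rw [Real.tanh_eq_sinh_div_cosh, div_le_one (Real.cosh_pos x)]
  exact (Real.sinh_lt_cosh x).le

lemma sinh_le_mul_cosh {x : ℝ} (hx : 0 ≤ x) : Real.sinh x ≤ x * Real.cosh x := by
  have key : ∀ y : ℝ, HasDerivAt (fun t => t * Real.cosh t - Real.sinh t)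
      (y * Real.sinh y) y := by
    intro y
    have h := ((hasDerivAt_id y).mul (Real.hasDerivAt_cosh y)).sub (Real.hasDerivAt_sinh y)
    exact (h : HasDerivAt (fun t => t * Real.cosh t - Real.sinh t) _ y).congr_deriv
      (by simp [mul_comm])
  have hmono : MonotoneOn (fun t => t * Real.cosh t - Real.sinh t) (Set.Ici 0) := by
    apply monotoneOn_of_deriv_nonneg (convex_Ici 0)
    · exact ((continuous_id.mul Real.continuous_cosh).sub Real.continuous_sinh).continuousOn
    · intro y hy
      exact ((key y).differentiableAt).differentiableWithinAt
    · intro y hy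
      rw [(key y).deriv]
      have hy0 : 0 < y := by simpa using hy
      exact mul_nonneg hy0.le (by simpa using Real.sinh_le_sinh.2 hy0.le)
  have h0 := hmono (self_mem_Ici) hx hx
  simp at h0
  linarith

lemma tanh_le_self {x : ℝ} (hx : 0 ≤ x) : Real.tanh x ≤ x := by
  rw [Real.tanh_eq_sinh_div_cosh, div_le_iff₀ (Real.cosh_pos x)]
  exact sinh_le_mul_cosh hx

lemma tanh_sq_eq (x : ℝ) : Real.tanh x ^ 2 = 1 - 1 / Real.cosh x ^ 2 := by
  have h := Real.cosh_sq_sub_sinh_sq x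
  have hc := (Real.cosh_pos x).ne'
  rw [Real.tanh_eq_sinh_div_cosh]
  field_simp
  nlinarith [Real.cosh_pos x]

lemma inv_cosh_sq_le {t : ℝ} (ht : 0 ≤ t) : 1 / Real.cosh t ^ 2 ≤ 4 * Real.exp (-2 * t) := by
  have h1 : Real.exp t / 2 ≤ Real.cosh t := by
    rw [Real.cosh_eq]
    have := (Real.exp_pos (-t)).le
    linarith
  have h2 : (Real.exp t / 2) ^ 2 ≤ Real.cosh t ^ 2 := by
    apply pow_le_pow_left₀ (by positivity) h1
  have h3 : (Real.exp t / 2) ^ 2 = Real.exp (2 * t) / 4 := by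
    rw [pow_two, div_mul_div_comm, ← Real.exp_add]
    norm_num
    ring_nf
  rw [div_le_iff₀ (by positivity)]
  calc (1:ℝ) = Real.exp (-2*t) * Real.exp (2*t) := by rw [← Real.exp_add]; simp
    _ ≤ 4 * Real.exp (-2*t) * Real.cosh t ^2 := by
        rw [h3] at h2
        nlinarith [Real.exp_pos (-2*t)]



lemma one_sub_exp_neg_le (x : ℝ) : 1 - Real.exp (-x) ≤ x := by
  have := Real.add_one_le_exp (-x); linarith

lemma one_sub_exp_neg_nonneg {x : ℝ} (hx : 0 ≤ x) : 0 ≤ 1 - Real.exp (-x) := by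
  have : Real.exp (-x) ≤ 1 := Real.exp_le_one_iff.2 (by linarith); linarith

lemma tail_integrable {ε : ℝ} (hε : 0 < ε) :
    IntegrableOn (fun u => Real.exp (-u)/u) (Set.Ioi ε) := by
  have hint : IntegrableOn (fun u => ε⁻¹ * Real.exp (-1*u)) (Set.Ioi ε) :=
    (exp_neg_integrableOn_Ioi ε one_pos).const_mul _
  apply Integrable.mono' hint
  · apply ContinuousOn.aestronglyMeasurable _ measurableSet_Ioi
    exact (Real.continuous_exp.comp continuous_neg).continuousOn.div continuousOn_id
      (fun x hx => ne_of_gt (lt_trans hε hx))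
  · filter_upwards [ae_restrict_mem measurableSet_Ioi] with t ht
    have ht0 : 0 < t := lt_trans hε ht
    rw [Real.norm_eq_abs, abs_of_nonneg (by positivity)]
    rw [div_le_iff₀ ht0]
    have h1 : (1:ℝ) ≤ t/ε := (one_le_div hε).2 (le_of_lt ht)
    have h2 : ε⁻¹ * Real.exp (-1*t) * t = (t/ε) * Real.exp (-t) := by
      rw [neg_one_mul]; ring
    rw [h2]
    nlinarith [Real.exp_pos (-t)]

lemma tail_eq {c ε : ℝ} (hc : 0 < c) (hε : 0 < ε) :
    ∫ t in Set.Ioi ε, Real.exp (-(c*t))/t = ∫ u in Set.Ioi (c*ε), Real.exp (-u)/u := by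
  have key := integral_comp_mul_left_Ioi (fun u => Real.exp (-u)/u) ε hc
  have congr1 : ∫ t in Set.Ioi ε, Real.exp (-(c*t))/t
      = ∫ t in Set.Ioi ε, c * (Real.exp (-(c*t))/(c*t)) := by
    apply setIntegral_congr_fun measurableSet_Ioi
    intro t ht
    have ht0 : 0 < t := lt_trans hε ht
    field_simp
  rw [congr1, integral_const_mul, key, smul_eq_mul]
  field_simp

lemma mid_value {x y : ℝ} (hx : 0 < x) (hxy : x ≤ y) :
    ∃ R : ℝ, |R| ≤ y - x ∧
      ∫ u in Set.Ioc x y, Real.exp (-u)/u = (Real.log y - Real.log x) - R := by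
  have hmeas : MeasurableSet (Set.Ioc x y) := measurableSet_Ioc
  have hsub : ∀ u ∈ Set.Ioc x y, (0:ℝ) < u := fun u hu => lt_of_lt_of_le hx hu.1.le
  -- integrability of 1/u and (1-exp(-u))/u on Ioc x y
  have hone : IntegrableOn (fun u => 1/u) (Set.Ioc x y) := by
    apply Integrable.mono' (integrable_const (1/x))
    · exact (continuousOn_const.div continuousOn_id
        (fun u hu => ne_of_gt (hsub u hu))).aestronglyMeasurable hmeas
    · filter_upwards [ae_restrict_mem hmeas] with u hu
      have hu0 := hsub u hu
      rw [Real.norm_eq_abs, abs_of_nonneg (by positivity)]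
      exact one_div_le_one_div_of_le hx hu.1.le
  have hrem : IntegrableOn (fun u => (1 - Real.exp (-u))/u) (Set.Ioc x y) := by
    apply Integrable.mono' (integrable_const 1)
    · exact ((continuousOn_const.sub (Real.continuous_exp.comp
        continuous_neg).continuousOn).div continuousOn_id
        (fun u hu => ne_of_gt (hsub u hu))).aestronglyMeasurable hmeas
    · filter_upwards [ae_restrict_mem hmeas] with u hu
      have hu0 := hsub u hu
      rw [Real.norm_eq_abs, abs_of_nonneg
        (div_nonneg (one_sub_exp_neg_nonneg hu0.le) hu0.le)]
      rw [div_le_one hu0]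
      exact one_sub_exp_neg_le u
  refine ⟨∫ u in Set.Ioc x y, (1 - Real.exp (-u))/u, ?_, ?_⟩
  · have := norm_setIntegral_le_of_norm_le_const (C := 1)
      (by rw [Real.volume_Ioc]; exact ENNReal.ofReal_lt_top : volume (Set.Ioc x y) < ⊤)
      (fun u hu => by
        have hu0 := hsub u hu
        rw [Real.norm_eq_abs, abs_of_nonneg
          (div_nonneg (one_sub_exp_neg_nonneg hu0.le) hu0.le), div_le_one hu0]
        exact one_sub_exp_neg_le u)
      (f := fun u => (1 - Real.exp (-u))/u)
    rw [Real.norm_eq_abs] at this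
    calc |∫ u in Set.Ioc x y, (1 - Real.exp (-u))/u| ≤ 1 * volume.real (Set.Ioc x y) := this
      _ = y - x := by rw [Real.volume_real_Ioc, one_mul, max_eq_left (by linarith)]
  · have hlog : ∫ u in Set.Ioc x y, 1/u = Real.log y - Real.log x := by
      rw [← intervalIntegral.integral_of_le hxy, integral_one_div, Real.log_div
        (by have : 0 < y := lt_of_lt_of_le hx hxy; linarith) (ne_of_gt hx)]
      intro h
      rcases Set.mem_uIcc.1 h with ⟨h1, _⟩ | ⟨h1, _⟩ <;> linarith
    have : ∫ u in Set.Ioc x y, Real.exp (-u)/u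
        = ∫ u in Set.Ioc x y, (1/u - (1 - Real.exp (-u))/u) := by
      apply setIntegral_congr_fun hmeas
      intro u hu
      have := hsub u hu
      field_simp
      ring
    rw [this, integral_sub hone hrem, hlog]

-- two-regime integrability helper
lemma integrableOn_Ioi_of_bounds {f : ℝ → ℝ} {M K c : ℝ} (hc : 0 < c)
    (hcont : ContinuousOn f (Set.Ioi 0))
    (h1 : ∀ t ∈ Set.Ioc (0:ℝ) 1, |f t| ≤ M)
    (h2 : ∀ t ∈ Set.Ioi (1:ℝ), |f t| ≤ K * Real.exp (-c * t)) :
    IntegrableOn f (Set.Ioi 0) := by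
  have hsplit : Set.Ioi (0:ℝ) = Set.Ioc 0 1 ∪ Set.Ioi 1 := by
    rw [Set.Ioc_union_Ioi_eq_Ioi]; norm_num
  rw [hsplit]
  apply MeasureTheory.IntegrableOn.union
  · have hmeas : AEStronglyMeasurable f (volume.restrict (Set.Ioc 0 1)) :=
      (hcont.mono (fun x hx => hx.1)).aestronglyMeasurable measurableSet_Ioc
    apply Integrable.mono' (integrable_const M) hmeas
    filter_upwards [ae_restrict_mem measurableSet_Ioc] with t ht
    simpa using h1 t ht
  · have hint : IntegrableOn (fun t => K * Real.exp (-c*t)) (Set.Ioi 1) :=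
      (exp_neg_integrableOn_Ioi 1 hc).const_mul K
    have hmeas : AEStronglyMeasurable f (volume.restrict (Set.Ioi 1)) :=
      (hcont.mono (Set.Ioi_subset_Ioi zero_le_one)).aestronglyMeasurable measurableSet_Ioi
    apply Integrable.mono' hint hmeas
    filter_upwards [ae_restrict_mem measurableSet_Ioi] with t ht
    simpa using h2 t ht

-- global exponential bound integrability helper
lemma integrableOn_Ioi_of_exp_bound {f : ℝ → ℝ} {K c : ℝ} (hc : 0 < c)
    (hcont : ContinuousOn f (Set.Ioi 0))
    (h : ∀ t ∈ Set.Ioi (0:ℝ), |f t| ≤ K * Real.exp (-c * t)) :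
    IntegrableOn f (Set.Ioi 0) := by
  have hint : IntegrableOn (fun t => K * Real.exp (-c*t)) (Set.Ioi 0) :=
    (exp_neg_integrableOn_Ioi 0 hc).const_mul K
  apply Integrable.mono' hint (hcont.aestronglyMeasurable measurableSet_Ioi)
  filter_upwards [ae_restrict_mem measurableSet_Ioi] with t ht
  simpa using h t ht


lemma frullani_pointwise {a b t : ℝ} (ha : 0 < a) (hab : a ≤ b) (ht : 0 < t) :
    (0 ≤ (Real.exp (-(a*t)) - Real.exp (-(b*t)))/t ∧
     (Real.exp (-(a*t)) - Real.exp (-(b*t)))/t ≤ (b - a) * Real.exp (-a * t)) := by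
  have key : Real.exp (-(a*t)) - Real.exp (-(b*t))
      = Real.exp (-(a*t)) * (1 - Real.exp (-((b-a)*t))) := by
    rw [mul_sub, mul_one, ← Real.exp_add]; ring_nf
  constructor
  · apply div_nonneg _ ht.le
    rw [key]
    exact mul_nonneg (Real.exp_pos _).le (one_sub_exp_neg_nonneg (by nlinarith))
  · rw [div_le_iff₀ ht, key]
    have h1 : 1 - Real.exp (-((b-a)*t)) ≤ (b-a)*t := one_sub_exp_neg_le _
    have h2 : (0:ℝ) < Real.exp (-(a*t)) := Real.exp_pos _
    calc Real.exp (-(a*t)) * (1 - Real.exp (-((b-a)*t)))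
        ≤ Real.exp (-(a*t)) * ((b-a)*t) := by nlinarith
      _ = (b-a) * Real.exp (-a*t) * t := by ring_nf
  
lemma frullani_integrableOn {a b : ℝ} (ha : 0 < a) (hab : a ≤ b) :
    IntegrableOn (fun t => (Real.exp (-(a*t)) - Real.exp (-(b*t)))/t) (Set.Ioi 0) := by
  apply integrableOn_Ioi_of_exp_bound ha
  · exact ((Real.continuous_exp.comp (continuous_const.mul continuous_id).neg).sub
      (Real.continuous_exp.comp (continuous_const.mul continuous_id).neg)).continuousOn.div
      continuousOn_id (fun x hx => ne_of_gt hx)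
  · intro t ht
    obtain ⟨h1, h2⟩ := frullani_pointwise ha hab ht
    rw [abs_of_nonneg h1]
    calc (Real.exp (-(a*t)) - Real.exp (-(b*t)))/t ≤ (b-a) * Real.exp (-a*t) := h2
      _ ≤ b * Real.exp (-a * t) := by nlinarith [Real.exp_pos (-a*t)]


lemma tail_integrable' {c ε : ℝ} (hc : 0 < c) (hε : 0 < ε) :
    IntegrableOn (fun t => Real.exp (-(c*t))/t) (Set.Ioi ε) := by
  have hint : IntegrableOn (fun t => ε⁻¹ * Real.exp (-c*t)) (Set.Ioi ε) :=
    (exp_neg_integrableOn_Ioi ε hc).const_mul _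
  apply Integrable.mono' hint
  · apply ContinuousOn.aestronglyMeasurable _ measurableSet_Ioi
    exact (Real.continuous_exp.comp (continuous_const.mul continuous_id).neg).continuousOn.div
      continuousOn_id (fun x hx => ne_of_gt (lt_trans hε hx))
  · filter_upwards [ae_restrict_mem measurableSet_Ioi] with t ht
    have ht0 : 0 < t := lt_trans hε ht
    rw [Real.norm_eq_abs, abs_of_nonneg (by positivity), div_le_iff₀ ht0]
    have h1 : (1:ℝ) ≤ t/ε := (one_le_div hε).2 (le_of_lt ht)
    have h2 : ε⁻¹ * Real.exp (-c*t) * t = (t/ε) * Real.exp (-(c*t)) := by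
      rw [neg_mul]; ring
    rw [h2]
    nlinarith [Real.exp_pos (-(c*t))]

lemma frullani {a b : ℝ} (ha : 0 < a) (hab : a ≤ b) :
    ∫ t in Set.Ioi (0:ℝ), (Real.exp (-(a*t)) - Real.exp (-(b*t)))/t
      = Real.log b - Real.log a := by
  have hb : 0 < b := lt_of_lt_of_le ha hab
  set f : ℝ → ℝ := fun t => (Real.exp (-(a*t)) - Real.exp (-(b*t)))/t with hf
  have hfi : IntegrableOn f (Set.Ioi 0) := frullani_integrableOn ha hab
  have hεpos : ∀ n : ℕ, (0:ℝ) < 1/(n+1) := fun n => by positivity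
  have key : ∀ n : ℕ, ∫ t in Set.Ioi (1/(n+1):ℝ), f t
      = ∫ u in Set.Ioc (a*(1/(n+1))) (b*(1/(n+1))), Real.exp (-u)/u := by
    intro n
    set ε : ℝ := 1/(n+1) with hεdef
    have hε : 0 < ε := hεpos n
    have inta := tail_integrable' ha hε
    have intb := tail_integrable' hb hε
    have e1 : ∫ t in Set.Ioi ε, f t
        = (∫ t in Set.Ioi ε, Real.exp (-(a*t))/t) - ∫ t in Set.Ioi ε, Real.exp (-(b*t))/t := by
      rw [← integral_sub inta intb]
      apply setIntegral_congr_fun measurableSet_Ioi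
      intro t ht
      simp only [hf, sub_div]
    have e3 : ∫ u in Set.Ioi (a*ε), Real.exp (-u)/u
        = (∫ u in Set.Ioc (a*ε) (b*ε), Real.exp (-u)/u)
          + ∫ u in Set.Ioi (b*ε), Real.exp (-u)/u := by
      have hsp : Set.Ioc (a*ε) (b*ε) ∪ Set.Ioi (b*ε) = Set.Ioi (a*ε) :=
        Set.Ioc_union_Ioi_eq_Ioi (by nlinarith)
      rw [← hsp, setIntegral_union (Set.Ioc_disjoint_Ioi le_rfl) measurableSet_Ioi
        ((tail_integrable (show (0:ℝ) < a*ε by positivity)).mono_set Set.Ioc_subset_Ioi_self)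
        (tail_integrable (show (0:ℝ) < b*ε by positivity))]
    rw [e1, tail_eq ha hε, tail_eq hb hε, e3]
    ring
  -- limit over shrinking cutoffs
  have hmono : Monotone (fun n : ℕ => Set.Ioi (1/(n+1):ℝ)) := by
    intro n m hnm
    apply Set.Ioi_subset_Ioi
    apply one_div_le_one_div_of_le (by positivity)
    exact_mod_cast Nat.add_le_add_right hnm 1
  have hunion : ⋃ n : ℕ, Set.Ioi (1/(n+1):ℝ) = Set.Ioi (0:ℝ) := by
    ext x
    simp only [Set.mem_iUnion, Set.mem_Ioi]
    constructor
    · rintro ⟨n, hn⟩; exact lt_trans (hεpos n) hn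
    · intro hx
      obtain ⟨n, hn⟩ := exists_nat_one_div_lt hx
      exact ⟨n, hn⟩
  have h1 : Tendsto (fun n : ℕ => ∫ t in Set.Ioi (1/(n+1):ℝ), f t) atTop
      (𝓝 (∫ t in Set.Ioi (0:ℝ), f t)) := by
    have := tendsto_setIntegral_of_monotone (fun n : ℕ => measurableSet_Ioi) hmono
      (by rw [hunion]; exact hfi)
    rwa [hunion] at this
  -- identify the limit
  have h2 : Tendsto (fun n : ℕ => ∫ t in Set.Ioi (1/(n+1):ℝ), f t) atTop
      (𝓝 (Real.log b - Real.log a)) := by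
    have hR : ∀ n : ℕ, ∃ R : ℝ, |R| ≤ (b-a) * (1/(n+1)) ∧
        ∫ t in Set.Ioi (1/(n+1):ℝ), f t = (Real.log b - Real.log a) - R := by
      intro n
      have hε := hεpos n
      obtain ⟨R, hR1, hR2⟩ := mid_value (x := a*(1/(n+1))) (y := b*(1/(n+1)))
        (by positivity) (by nlinarith)
      refine ⟨R, by linarith [hR1, show (b-a)*(1/(n+1):ℝ) = b*(1/(n+1)) - a*(1/(n+1)) by ring], ?_⟩
      rw [key n, hR2]
      have hla : Real.log (a*(1/(n+1))) = Real.log a + Real.log (1/(n+1)) :=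
        Real.log_mul (ne_of_gt ha) (ne_of_gt hε)
      have hlb : Real.log (b*(1/(n+1))) = Real.log b + Real.log (1/(n+1)) :=
        Real.log_mul (ne_of_gt hb) (ne_of_gt hε)
      rw [hla, hlb]
      ring
    choose R hRb hReq using hR
    have hR0 : Tendsto R atTop (𝓝 0) := by
      apply squeeze_zero_norm hRb
      have : Tendsto (fun n : ℕ => (1:ℝ)/(n+1)) atTop (𝓝 0) :=
        tendsto_one_div_add_atTop_nhds_zero_nat
      simpa using this.const_mul (b-a)
    have := (tendsto_const_nhds (x := Real.log b - Real.log a) (f := atTop (α := ℕ))).sub hR0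
    rw [sub_zero] at this
    exact Tendsto.congr (fun n => (hReq n).symm) this
  exact tendsto_nhds_unique h1 h2


noncomputable def Jf (k : ℕ) : ℝ → ℝ :=
  fun t => Real.exp (-(((k:ℝ) - 1/2)*t)) * Real.tanh (t/4) / t

noncomputable def J (k : ℕ) : ℝ := ∫ t in Set.Ioi (0:ℝ), Jf k t

noncomputable def S (k : ℕ) : ℝ :=
  Real.log (Real.Gamma ((k:ℝ) - 1/2)) + Real.log (Real.Gamma ((k:ℝ) + 1/2))
    - 2 * Real.log (Real.Gamma (k:ℝ))

lemma Jf_cont (k : ℕ) : ContinuousOn (Jf k) (Set.Ioi 0) := by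
  apply ContinuousOn.div
  · exact ((Real.continuous_exp.comp (continuous_const.mul continuous_id).neg).mul
      (continuous_tanh.comp (continuous_id.div_const 4))).continuousOn
  · exact continuousOn_id
  · exact fun x hx => ne_of_gt hx

lemma Jf_nonneg {k : ℕ} {t : ℝ} (ht : 0 < t) : 0 ≤ Jf k t := by
  apply div_nonneg _ ht.le
  exact mul_nonneg (Real.exp_pos _).le (tanh_nonneg (by linarith))

lemma Jf_le {k : ℕ} {t : ℝ} (ht : 0 < t) :
    Jf k t ≤ (1/4) * Real.exp (-(((k:ℝ) - 1/2)*t)) := by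
  rw [Jf, div_le_iff₀ ht]
  have h1 : Real.tanh (t/4) ≤ t/4 := tanh_le_self (by linarith)
  nlinarith [Real.exp_pos (-(((k:ℝ) - 1/2)*t)), tanh_nonneg (show (0:ℝ) ≤ t/4 by linarith)]

lemma Jf_integrableOn {k : ℕ} (hk : 1 ≤ k) : IntegrableOn (Jf k) (Set.Ioi 0) := by
  have hk2 : (1:ℝ)/2 ≤ (k:ℝ) - 1/2 := by
    have : (1:ℝ) ≤ (k:ℝ) := by exact_mod_cast hk
    linarith
  apply integrableOn_Ioi_of_exp_bound (K := 1/4) (c := 1/2) (by norm_num) (Jf_cont k)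
  intro t ht
  rw [Set.mem_Ioi] at ht
  rw [abs_of_nonneg (Jf_nonneg ht)]
  calc Jf k t ≤ (1/4) * Real.exp (-(((k:ℝ) - 1/2)*t)) := Jf_le ht
    _ ≤ 1/4 * Real.exp (-(1/2) * t) := by
        have : -(((k:ℝ) - 1/2)*t) ≤ -(1/2)*t := by nlinarith
        nlinarith [Real.exp_le_exp.2 this]

lemma integral_exp_neg_mul {c : ℝ} (hc : 0 < c) :
    ∫ t in Set.Ioi (0:ℝ), Real.exp (-(c*t)) = c⁻¹ := by
  have key := integral_comp_mul_left_Ioi (fun u => Real.exp (-u)) 0 hc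
  simp only [mul_zero] at key
  rw [show ∫ t in Set.Ioi (0:ℝ), Real.exp (-(c*t))
    = ∫ t in Set.Ioi (0:ℝ), (fun u => Real.exp (-u)) (c*t) by rfl, key,
    integral_exp_neg_Ioi, smul_eq_mul]
  simp

lemma J_nonneg (k : ℕ) : 0 ≤ J k := by
  apply setIntegral_nonneg measurableSet_Ioi
  intro t ht
  exact Jf_nonneg ht

lemma J_le {k : ℕ} (hk : 1 ≤ k) : J k ≤ (1/4) * ((k:ℝ) - 1/2)⁻¹ := by
  have hck : (0:ℝ) < (k:ℝ) - 1/2 := by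
    have : (1:ℝ) ≤ (k:ℝ) := by exact_mod_cast hk
    linarith
  have hint : IntegrableOn (fun t => (1/4) * Real.exp (-(((k:ℝ) - 1/2)*t))) (Set.Ioi 0) := by
    have h0 := (exp_neg_integrableOn_Ioi 0 hck).const_mul (1/4:ℝ)
    simpa only [neg_mul, IntegrableOn] using h0
  have := setIntegral_mono_on (Jf_integrableOn hk) hint measurableSet_Ioi
    (fun t ht => Jf_le (Set.mem_Ioi.1 ht))
  calc J k ≤ ∫ t in Set.Ioi (0:ℝ), (1/4) * Real.exp (-(((k:ℝ) - 1/2)*t)) := this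
    _ = (1/4) * ((k:ℝ) - 1/2)⁻¹ := by
        rw [integral_const_mul, integral_exp_neg_mul hck]

lemma J_tendsto_zero : Tendsto J atTop (𝓝 0) := by
  have h1 : Tendsto (fun k : ℕ => (1/4:ℝ) * ((k:ℝ) - 1/2)⁻¹) atTop (𝓝 0) := by
    have h2 : Tendsto (fun k : ℕ => (k:ℝ) - 1/2) atTop atTop :=
      tendsto_atTop_add_const_right _ _ tendsto_natCast_atTop_atTop
    simpa using (tendsto_inv_atTop_zero.comp h2).const_mul (1/4:ℝ)
  apply squeeze_zero' (Filter.Eventually.of_forall fun k => J_nonneg k) _ h1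
  filter_upwards [eventually_ge_atTop 1] with k hk using J_le hk

lemma exp_sub_identity (x t : ℝ) :
    (Real.exp (-(x*t)) - Real.exp (-((x+1)*t))) * Real.tanh (t/4)
      = Real.exp (-(x*t)) + Real.exp (-((x+1)*t)) - 2*Real.exp (-((x+1/2)*t)) := by
  set q : ℝ := Real.exp (-(t/4)) with hqdef
  have hq : 0 < q := Real.exp_pos _
  have hq4 : Real.exp (-t) = q^4 := by
    rw [hqdef, ← Real.exp_nat_mul]
    congr 1
    push_cast
    ring
  have hq2 : Real.exp (-(t/2)) = q^2 := by
    rw [hqdef, ← Real.exp_nat_mul]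
    congr 1
    push_cast
    ring
  have h1 : Real.exp (-((x+1)*t)) = Real.exp (-(x*t)) * q^4 := by
    rw [← hq4, ← Real.exp_add]; ring_nf
  have h2 : Real.exp (-((x+1/2)*t)) = Real.exp (-(x*t)) * q^2 := by
    rw [← hq2, ← Real.exp_add]; ring_nf
  have htanh : Real.tanh (t/4) = (q⁻¹ - q)/(q⁻¹ + q) := by
    rw [Real.tanh_eq_sinh_div_cosh, Real.sinh_eq, Real.cosh_eq]
    rw [show Real.exp (t/4) = q⁻¹ by rw [hqdef, ← Real.exp_neg]; ring_nf]
    rw [show Real.exp (-(t/4)) = q from rfl]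
    field_simp
  rw [h1, h2, htanh]
  have hden : q⁻¹ + q ≠ 0 := by positivity
  field_simp
  ring

lemma J_diff {k : ℕ} (hk : 1 ≤ k) :
    J k - J (k+1) = 2*Real.log k - Real.log ((k:ℝ) - 1/2) - Real.log ((k:ℝ) + 1/2) := by
  have hk1 : (1:ℝ) ≤ (k:ℝ) := by exact_mod_cast hk
  have ha : (0:ℝ) < (k:ℝ) - 1/2 := by linarith
  have hsub : ∫ t in Set.Ioi (0:ℝ), (Jf k t - Jf (k+1) t) = J k - J (k+1) :=
    integral_sub (Jf_integrableOn hk) (Jf_integrableOn (by omega))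
  have hptw : ∀ t ∈ Set.Ioi (0:ℝ), Jf k t - Jf (k+1) t
      = (Real.exp (-(((k:ℝ)-1/2)*t)) - Real.exp (-((k:ℝ)*t)))/t
        - (Real.exp (-((k:ℝ)*t)) - Real.exp (-(((k:ℝ)+1/2)*t)))/t := by
    intro t ht
    rw [Set.mem_Ioi] at ht
    have key := exp_sub_identity ((k:ℝ) - 1/2) t
    have e1 : (k:ℝ) - 1/2 + 1 = (k:ℝ) + 1/2 := by ring
    have e2 : (k:ℝ) - 1/2 + 1/2 = (k:ℝ) := by ring
    rw [e1, e2] at key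
    simp only [Jf]
    have e3 : ((k+1:ℕ):ℝ) - 1/2 = (k:ℝ) + 1/2 := by push_cast; ring
    rw [e3, div_sub_div_same, div_sub_div_same, ← sub_mul, key]
    ring
  have hfr1 := frullani (a := (k:ℝ) - 1/2) (b := (k:ℝ)) ha (by linarith)
  have hfr2 := frullani (a := (k:ℝ)) (b := (k:ℝ) + 1/2) (by linarith) (by linarith)
  rw [← hsub, setIntegral_congr_fun measurableSet_Ioi hptw,
    integral_sub (frullani_integrableOn ha (by linarith))
      (frullani_integrableOn (by linarith) (by linarith)), hfr1, hfr2]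
  ring

lemma Gamma_pos_k {k : ℕ} (hk : 1 ≤ k) :
    0 < Real.Gamma ((k:ℝ) - 1/2) ∧ 0 < Real.Gamma ((k:ℝ) + 1/2) ∧ 0 < Real.Gamma (k:ℝ) := by
  have hk1 : (1:ℝ) ≤ (k:ℝ) := by exact_mod_cast hk
  exact ⟨Real.Gamma_pos_of_pos (by linarith), Real.Gamma_pos_of_pos (by linarith),
    Real.Gamma_pos_of_pos (by linarith)⟩

lemma S_diff {k : ℕ} (hk : 1 ≤ k) :
    S k - S (k+1) = 2*Real.log k - Real.log ((k:ℝ) - 1/2) - Real.log ((k:ℝ) + 1/2) := by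
  have hk1 : (1:ℝ) ≤ (k:ℝ) := by exact_mod_cast hk
  obtain ⟨hg1, hg2, hg3⟩ := Gamma_pos_k hk
  have e1 : ((k+1:ℕ):ℝ) - 1/2 = ((k:ℝ) - 1/2) + 1 := by push_cast; ring
  have e2 : ((k+1:ℕ):ℝ) + 1/2 = ((k:ℝ) + 1/2) + 1 := by push_cast; ring
  have e3 : ((k+1:ℕ):ℝ) = (k:ℝ) + 1 := by push_cast; ring
  have g1 : Real.Gamma (((k+1:ℕ):ℝ) - 1/2) = ((k:ℝ) - 1/2) * Real.Gamma ((k:ℝ) - 1/2) := by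
    rw [e1, Real.Gamma_add_one (by linarith)]
  have g2 : Real.Gamma (((k+1:ℕ):ℝ) + 1/2) = ((k:ℝ) + 1/2) * Real.Gamma ((k:ℝ) + 1/2) := by
    rw [e2, Real.Gamma_add_one (by linarith)]
  have g3 : Real.Gamma ((k+1:ℕ):ℝ) = (k:ℝ) * Real.Gamma (k:ℝ) := by
    rw [e3, Real.Gamma_add_one (by linarith)]
  rw [S, S, g1, g2, g3,
    Real.log_mul (by linarith) (ne_of_gt hg1),
    Real.log_mul (by linarith) (ne_of_gt hg2),
    Real.log_mul (by linarith) (ne_of_gt hg3)]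
  ring

lemma S_one : S 1 = Real.log (π/2) := by
  have h12 : Real.Gamma ((1:ℝ) - 1/2) = Real.sqrt π := by
    norm_num [Real.Gamma_one_half_eq]
  have h32 : Real.Gamma ((1:ℝ) + 1/2) = (1/2) * Real.sqrt π := by
    rw [show (1:ℝ) + 1/2 = 1/2 + 1 by ring, Real.Gamma_add_one (by norm_num),
      Real.Gamma_one_half_eq]
  have hsq : Real.log (Real.sqrt π) = Real.log π / 2 := Real.log_sqrt Real.pi_pos.le
  have hsqpos : (0:ℝ) < Real.sqrt π := Real.sqrt_pos.2 Real.pi_pos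
  rw [S, Nat.cast_one, h12, h32, Real.Gamma_one, Real.log_one,
    Real.log_mul (by norm_num) (ne_of_gt hsqpos), hsq,
    Real.log_div (ne_of_gt Real.pi_pos) (by norm_num),
    show (1:ℝ)/2 = 2⁻¹ by norm_num, Real.log_inv]
  ring

lemma S_tendsto_zero : Tendsto S atTop (𝓝 0) := by
  set W : ℕ → ℝ := fun n =>
    ∏ i ∈ Finset.range n, ((2:ℝ)*i+2)/(2*i+1) * ((2*i+2)/(2*i+3)) with hWdef
  have hWpos : ∀ n, 0 < W n := by
    intro n
    apply Finset.prod_pos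
    intro i _
    have : (0:ℝ) ≤ (i:ℝ) := Nat.cast_nonneg i
    positivity
  have hfacpos : ∀ i : ℕ, (0:ℝ) < ((2:ℝ)*i+2)/(2*i+1) * ((2*i+2)/(2*i+3)) := by
    intro i
    have : (0:ℝ) ≤ (i:ℝ) := Nat.cast_nonneg i
    positivity
  have hkey : ∀ n : ℕ, S (n+1) = Real.log (π/2) - Real.log (W n) := by
    intro n
    induction n with
    | zero =>
      have hW0 : W 0 = 1 := by simp [hWdef]
      rw [hW0, Real.log_one, sub_zero, zero_add, S_one]
    | succ n ih =>
      have hd := S_diff (k := n+1) (by omega)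
      have hW' : W (n+1) = W n * (((2:ℝ)*n+2)/(2*n+1) * ((2*n+2)/(2*n+3))) := by
        rw [hWdef]; exact Finset.prod_range_succ _ n
      have hlfac : Real.log (((2:ℝ)*n+2)/(2*n+1) * ((2*n+2)/(2*n+3)))
          = 2*Real.log ((n+1:ℕ):ℝ) - Real.log (((n+1:ℕ):ℝ) - 1/2)
            - Real.log (((n+1:ℕ):ℝ) + 1/2) := by
        have hn0 : (0:ℝ) ≤ (n:ℝ) := Nat.cast_nonneg n
        have l1 : (2:ℝ)*n+2 = 2*((n:ℝ)+1) := by ring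
        have l2 : (2:ℝ)*n+1 = 2*((n:ℝ)+1/2) := by ring
        have l3 : (2:ℝ)*n+3 = 2*((n:ℝ)+3/2) := by ring
        rw [Real.log_mul (by positivity) (by positivity),
          Real.log_div (by positivity) (by positivity),
          Real.log_div (by positivity) (by positivity), l1, l2, l3,
          Real.log_mul (by norm_num) (by positivity),
          Real.log_mul (by norm_num) (by positivity),
          Real.log_mul (by norm_num) (by positivity)]
        have c1 : ((n+1:ℕ):ℝ) = (n:ℝ)+1 := by push_cast; ring
        have c2 : ((n+1:ℕ):ℝ) - 1/2 = (n:ℝ)+1/2 := by push_cast; ring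
        have c3 : ((n+1:ℕ):ℝ) + 1/2 = (n:ℝ)+3/2 := by push_cast; ring
        rw [c2, c3, c1]
        ring
      have hlW : Real.log (W (n+1)) = Real.log (W n)
          + (2*Real.log ((n+1:ℕ):ℝ) - Real.log (((n+1:ℕ):ℝ) - 1/2)
            - Real.log (((n+1:ℕ):ℝ) + 1/2)) := by
        rw [hW', Real.log_mul (ne_of_gt (hWpos n)) (ne_of_gt (hfacpos n)), hlfac]
      have : S (n+1+1) = S (n+1) - (2*Real.log ((n+1:ℕ):ℝ)
          - Real.log (((n+1:ℕ):ℝ) - 1/2) - Real.log (((n+1:ℕ):ℝ) + 1/2)) := by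
        linarith [hd]
      rw [this, ih, hlW]
      ring
  have hWlim : Tendsto (fun n => Real.log (W n)) atTop (𝓝 (Real.log (π/2))) := by
    have hcont : ContinuousAt Real.log (π/2) :=
      Real.continuousAt_log (by positivity)
    exact hcont.tendsto.comp Real.tendsto_prod_pi_div_two
  have hS1 : Tendsto (fun n => S (n+1)) atTop (𝓝 0) := by
    have := (tendsto_const_nhds (x := Real.log (π/2)) (f := atTop (α := ℕ))).sub hWlim
    rw [sub_self] at this
    exact Tendsto.congr (fun n => (hkey n).symm) this
  exact (tendsto_add_atTop_iff_nat 1).1 hS1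

lemma S_eq_J {k : ℕ} (hk : 1 ≤ k) : S k = J k := by
  have hdiff : ∀ n : ℕ, S (n+1) - J (n+1) = S (n+2) - J (n+2) := by
    intro n
    have h1 := S_diff (k := n+1) (by omega)
    have h2 := J_diff (k := n+1) (by omega)
    have : S (n+1) - S (n+1+1) = J (n+1) - J (n+1+1) := by rw [h1, h2]
    have e : n+1+1 = n+2 := rfl
    rw [e] at this
    linarith
  have hconst : ∀ n : ℕ, S (n+1) - J (n+1) = S 1 - J 1 := by
    intro n
    induction n with
    | zero => rfl
    | succ m ih => rw [← hdiff m] at *; exact ih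
  have hlim : Tendsto (fun n : ℕ => S (n+1) - J (n+1)) atTop (𝓝 0) := by
    have hs := (tendsto_add_atTop_iff_nat 1).2 S_tendsto_zero
    have hj := (tendsto_add_atTop_iff_nat 1).2 J_tendsto_zero
    simpa using hs.sub hj
  have hlim2 : Tendsto (fun n : ℕ => S (n+1) - J (n+1)) atTop (𝓝 (S 1 - J 1)) := by
    exact Tendsto.congr (fun n => (hconst n).symm) tendsto_const_nhds
  have h0 : S 1 - J 1 = 0 := tendsto_nhds_unique hlim2 hlim
  obtain ⟨m, rfl⟩ : ∃ m, k = m + 1 := ⟨k - 1, by omega⟩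
  have := hconst m
  linarith

lemma exp_half_identity (x t : ℝ) :
    Real.exp (-((x+1/2)*t)) * Real.tanh (t/4)
      = (Real.exp (-(x*t)) - Real.exp (-((x+1)*t))) / (4 * Real.cosh (t/4)^2) := by
  set q : ℝ := Real.exp (-(t/4)) with hqdef
  have hq : 0 < q := Real.exp_pos _
  have hq4 : Real.exp (-t) = q^4 := by
    rw [hqdef, ← Real.exp_nat_mul]; congr 1; push_cast; ring
  have hq2 : Real.exp (-(t/2)) = q^2 := by
    rw [hqdef, ← Real.exp_nat_mul]; congr 1; push_cast; ring
  have h1 : Real.exp (-((x+1)*t)) = Real.exp (-(x*t)) * q^4 := by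
    rw [← hq4, ← Real.exp_add]; ring_nf
  have h2 : Real.exp (-((x+1/2)*t)) = Real.exp (-(x*t)) * q^2 := by
    rw [← hq2, ← Real.exp_add]; ring_nf
  have htanh : Real.tanh (t/4) = (q⁻¹ - q)/(q⁻¹ + q) := by
    rw [Real.tanh_eq_sinh_div_cosh, Real.sinh_eq, Real.cosh_eq]
    rw [show Real.exp (t/4) = q⁻¹ by rw [hqdef, ← Real.exp_neg]; ring_nf]
    rw [show Real.exp (-(t/4)) = q from rfl]
    field_simp
  have hcosh : Real.cosh (t/4) = (q⁻¹ + q)/2 := by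
    rw [Real.cosh_eq, show Real.exp (t/4) = q⁻¹ by rw [hqdef, ← Real.exp_neg]; ring_nf,
      show Real.exp (-(t/4)) = q from rfl]
  rw [h1, h2, htanh, hcosh]
  have hden : q⁻¹ + q ≠ 0 := by positivity
  field_simp
  ring

lemma sum_Jf (N : ℕ) {t : ℝ} (ht : 0 < t) :
    ∑ k ∈ Finset.Icc 1 N, Jf k t
      = (1 - Real.exp (-((N:ℝ)*t))) / (4 * t * Real.cosh (t/4)^2) := by
  induction N with
  | zero => simp
  | succ N ih =>
    rw [Finset.sum_Icc_succ_top (by omega : 1 ≤ N+1), ih]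
    have hJ : Jf (N+1) t
        = (Real.exp (-((N:ℝ)*t)) - Real.exp (-(((N:ℝ)+1)*t))) / (4 * t * Real.cosh (t/4)^2) := by
      have key := exp_half_identity (N:ℝ) t
      rw [Jf, show ((N+1:ℕ):ℝ) - 1/2 = (N:ℝ) + 1/2 by push_cast; ring, key]
      rw [div_div]
      ring_nf
    rw [hJ]
    have hc : Real.cosh (t/4) ≠ 0 := (Real.cosh_pos _).ne'
    have hcast : ((N+1:ℕ):ℝ) = (N:ℝ) + 1 := by push_cast; ring
    rw [hcast]
    field_simp
    ring

lemma sumS_eq_integral (N : ℕ) :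
    ∑ k ∈ Finset.Icc 1 N, S k
      = ∫ t in Set.Ioi (0:ℝ), (1 - Real.exp (-((N:ℝ)*t))) / (4 * t * Real.cosh (t/4)^2) := by
  have h1 : ∀ k ∈ Finset.Icc 1 N, S k = J k := fun k hk => S_eq_J (Finset.mem_Icc.1 hk).1
  rw [Finset.sum_congr rfl h1]
  have h2 : ∑ k ∈ Finset.Icc 1 N, J k
      = ∫ t in Set.Ioi (0:ℝ), ∑ k ∈ Finset.Icc 1 N, Jf k t := by
    simp only [J]
    exact (MeasureTheory.integral_finset_sum (Finset.Icc 1 N)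
      (fun k hk => Jf_integrableOn (Finset.mem_Icc.1 hk).1)).symm
  rw [h2]
  apply setIntegral_congr_fun measurableSet_Ioi
  intro t ht
  exact sum_Jf N ht

lemma sumS_eq_integral' (N : ℕ) :
    ∑ k ∈ Finset.Icc 1 N, S k
      = (1/4) * ∫ t in Set.Ioi (0:ℝ),
          (1 - Real.exp (-(4*(N:ℝ)*t))) / (t * Real.cosh t^2) := by
  rw [sumS_eq_integral N]
  set f : ℝ → ℝ := fun t => (1 - Real.exp (-((N:ℝ)*t))) / (4 * t * Real.cosh (t/4)^2) with hfdef
  have key := integral_comp_mul_left_Ioi f 0 (show (0:ℝ) < 4 by norm_num)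
  simp only [mul_zero] at key
  have key2 : ∫ t in Set.Ioi (0:ℝ), f t = 4 * ∫ x in Set.Ioi (0:ℝ), f (4*x) := by
    rw [key, smul_eq_mul]; ring
  have congrg : ∫ x in Set.Ioi (0:ℝ), f (4*x)
      = ∫ x in Set.Ioi (0:ℝ), (1/16) * ((1 - Real.exp (-(4*(N:ℝ)*x))) / (x * Real.cosh x^2)) := by
    apply setIntegral_congr_fun measurableSet_Ioi
    intro x hx
    rw [Set.mem_Ioi] at hx
    have hc : Real.cosh x ≠ 0 := (Real.cosh_pos _).ne'
    simp only [hfdef]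
    rw [show (4*x)/4 = x by ring, show -((N:ℝ)*(4*x)) = -(4*(N:ℝ)*x) by ring]
    field_simp
    ring_nf
    try exact Or.inl trivial
  rw [key2, congrg, MeasureTheory.integral_const_mul]
  ring
lemma intA (N : ℕ) : IntegrableOn
    (fun t => (1 - Real.exp (-(4*(N:ℝ)*t))) / (t * Real.cosh t^2)) (Set.Ioi 0) := by
  apply integrableOn_Ioi_of_bounds (M := 4*(N:ℝ)) (K := 4) (c := 2) (by norm_num)
  · apply ContinuousOn.div
    · exact (continuous_const.sub (Real.continuous_exp.comp
        (continuous_const.mul continuous_id).neg)).continuousOn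
    · exact (continuous_id.mul (Real.continuous_cosh.pow 2)).continuousOn
    · intro x hx
      have h1 := Real.cosh_pos x
      have hx0 : (0:ℝ) < x := hx
      positivity
  · intro t ht
    obtain ⟨ht0, ht1⟩ := ht
    have hE : 0 ≤ 1 - Real.exp (-(4*(N:ℝ)*t)) := one_sub_exp_neg_nonneg (by positivity)
    have hEle : 1 - Real.exp (-(4*(N:ℝ)*t)) ≤ 4*(N:ℝ)*t := one_sub_exp_neg_le _
    have hcosh : (1:ℝ) ≤ Real.cosh t ^ 2 := by nlinarith [Real.one_le_cosh t]
    have hden : (0:ℝ) < t * Real.cosh t^2 := by nlinarith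
    rw [abs_of_nonneg (div_nonneg hE hden.le), div_le_iff₀ hden]
    have hN0 : (0:ℝ) ≤ 4*(N:ℝ) := by positivity
    nlinarith
  · intro t ht
    rw [Set.mem_Ioi] at ht
    have ht0 : (0:ℝ) < t := by linarith
    have hE : 0 ≤ 1 - Real.exp (-(4*(N:ℝ)*t)) := one_sub_exp_neg_nonneg (by positivity)
    have hE1 : 1 - Real.exp (-(4*(N:ℝ)*t)) ≤ 1 := by
      have := Real.exp_pos (-(4*(N:ℝ)*t)); linarith
    have hc2 : (0:ℝ) < Real.cosh t^2 := by have := Real.cosh_pos t; positivity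
    have hden : (0:ℝ) < t * Real.cosh t^2 := by positivity
    rw [abs_of_nonneg (div_nonneg hE hden.le), div_le_iff₀ hden]
    have h2 : 1 / Real.cosh t^2 ≤ 4 * Real.exp (-2*t) := inv_cosh_sq_le ht0.le
    have h3 : (1:ℝ) ≤ 4*Real.exp (-2*t) * Real.cosh t^2 := by
      rw [div_le_iff₀ hc2] at h2; linarith
    nlinarith [Real.exp_pos (-2*t), mul_nonneg (mul_nonneg (by norm_num : (0:ℝ) ≤ 4)
      (Real.exp_pos (-2*t)).le) hc2.le]

lemma intD {N : ℕ} (hN : 1 ≤ N) : IntegrableOn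
    (fun t => Real.exp (-(4*(N:ℝ)*t)) * Real.tanh t^2 / t) (Set.Ioi 0) := by
  have hN1 : (1:ℝ) ≤ (N:ℝ) := by exact_mod_cast hN
  apply integrableOn_Ioi_of_bounds (M := 1) (K := 1) (c := 1) (by norm_num)
  · apply ContinuousOn.div
    · exact ((Real.continuous_exp.comp (continuous_const.mul continuous_id).neg).mul
        (continuous_tanh.pow 2)).continuousOn
    · exact continuousOn_id
    · exact fun x hx => ne_of_gt hx
  · intro t ht
    obtain ⟨ht0, ht1⟩ := ht
    have hexp : Real.exp (-(4*(N:ℝ)*t)) ≤ 1 := Real.exp_le_one_iff.2 (by nlinarith)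
    have htanh : Real.tanh t ^ 2 ≤ t^2 := by
      have h1 := tanh_le_self ht0.le
      have h2 := tanh_nonneg ht0.le
      nlinarith
    have hnum : 0 ≤ Real.exp (-(4*(N:ℝ)*t)) * Real.tanh t^2 :=
      mul_nonneg (Real.exp_pos _).le (sq_nonneg _)
    rw [abs_of_nonneg (div_nonneg hnum ht0.le), div_le_iff₀ ht0]
    nlinarith [Real.exp_pos (-(4*(N:ℝ)*t))]
  · intro t ht
    rw [Set.mem_Ioi] at ht
    have ht0 : (0:ℝ) < t := by linarith
    have htanh : Real.tanh t ^ 2 ≤ 1 := by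
      have h1 := tanh_le_one t
      have h2 := tanh_nonneg ht0.le
      nlinarith
    have hexp : Real.exp (-(4*(N:ℝ)*t)) ≤ Real.exp (-1*t) :=
      Real.exp_le_exp.2 (by nlinarith)
    have hnum : 0 ≤ Real.exp (-(4*(N:ℝ)*t)) * Real.tanh t^2 :=
      mul_nonneg (Real.exp_pos _).le (sq_nonneg _)
    rw [abs_of_nonneg (div_nonneg hnum ht0.le), div_le_iff₀ ht0]
    have h1t : (1:ℝ) ≤ t := ht.le
    nlinarith [Real.exp_pos (-(4*(N:ℝ)*t)), Real.exp_pos (-1*t), sq_nonneg (Real.tanh t)]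

lemma intC : IntegrableOn
    (fun t => (1/t) * (Real.exp (-4*t) - 1/Real.cosh t^2)) (Set.Ioi 0) := by
  apply integrableOn_Ioi_of_bounds (M := 5) (K := 5) (c := 2) (by norm_num)
  · apply ContinuousOn.mul
    · exact continuousOn_const.div continuousOn_id (fun x hx => ne_of_gt hx)
    · apply ContinuousOn.sub
      · exact (Real.continuous_exp.comp (continuous_const.mul continuous_id)).continuousOn
      · exact continuousOn_const.div (Real.continuous_cosh.pow 2).continuousOn
          (fun x _ => by have := Real.cosh_pos x; positivity)
  · intro t ht
    obtain ⟨ht0, ht1⟩ := ht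
    have key : |Real.exp (-4*t) - 1/Real.cosh t^2| ≤ 5*t := by
      have b1 : |Real.exp (-4*t) - 1| ≤ 4*t := by
        rw [abs_sub_comm, abs_of_nonneg (by
          have : Real.exp (-4*t) ≤ 1 := Real.exp_le_one_iff.2 (by nlinarith)
          linarith)]
        have := one_sub_exp_neg_le (4*t)
        rw [show -(4*t) = -4*t by ring] at this
        linarith
      have b2 : |1 - 1/Real.cosh t^2| ≤ t^2 := by
        rw [← tanh_sq_eq, abs_of_nonneg (sq_nonneg _)]
        have h1 := tanh_le_self ht0.le
        have h2 := tanh_nonneg ht0.le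
        nlinarith
      calc |Real.exp (-4*t) - 1/Real.cosh t^2|
          ≤ |Real.exp (-4*t) - 1| + |1 - 1/Real.cosh t^2| := by
            have := abs_sub_le (Real.exp (-4*t)) 1 (1/Real.cosh t^2)
            linarith
        _ ≤ 4*t + t^2 := by linarith
        _ ≤ 5*t := by nlinarith
    rw [abs_mul, abs_of_nonneg (by positivity : (0:ℝ) ≤ 1/t)]
    calc (1/t) * |Real.exp (-4*t) - 1/Real.cosh t^2| ≤ (1/t) * (5*t) := by
          apply mul_le_mul_of_nonneg_left key (by positivity)
      _ = 5 := by field_simp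
  · intro t ht
    rw [Set.mem_Ioi] at ht
    have ht0 : (0:ℝ) < t := by linarith
    have key : |Real.exp (-4*t) - 1/Real.cosh t^2| ≤ 5 * Real.exp (-2*t) := by
      have b1 : Real.exp (-4*t) ≤ Real.exp (-2*t) := Real.exp_le_exp.2 (by nlinarith)
      have b2 : 1/Real.cosh t^2 ≤ 4*Real.exp (-2*t) := inv_cosh_sq_le ht0.le
      have b3 : 0 < Real.exp (-4*t) := Real.exp_pos _
      have b4 : 0 < 1/Real.cosh t^2 := by have := Real.cosh_pos t; positivity
      rw [abs_le]
      constructor <;> nlinarith [Real.exp_pos (-2*t)]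
    rw [abs_mul, abs_of_nonneg (by positivity : (0:ℝ) ≤ 1/t)]
    calc (1/t) * |Real.exp (-4*t) - 1/Real.cosh t^2| ≤ 1 * (5*Real.exp (-2*t)) := by
          apply mul_le_mul (by rw [div_le_one ht0]; exact ht.le) key (abs_nonneg _) (by norm_num)
      _ = 5 * Real.exp (-2*t) := by ring

lemma key_pointwise {N : ℕ} {t : ℝ} (ht : 0 < t) :
    (1 - Real.exp (-(4*(N:ℝ)*t))) / (t * Real.cosh t^2)
      - (Real.exp (-(4*t)) - Real.exp (-(4*(N:ℝ)*t)))/t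
      + (1/t) * (Real.exp (-4*t) - 1/Real.cosh t^2)
      = Real.exp (-(4*(N:ℝ)*t)) * Real.tanh t^2 / t := by
  have ht0 : t ≠ 0 := ne_of_gt ht
  have hc : Real.cosh t ≠ 0 := (Real.cosh_pos t).ne'
  have hinv : 1/Real.cosh t^2 = 1 - Real.tanh t^2 := by
    have := tanh_sq_eq t; linarith
  have hA : (1 - Real.exp (-(4*(N:ℝ)*t))) / (t * Real.cosh t^2)
      = (1 - Real.exp (-(4*(N:ℝ)*t))) * (1 - Real.tanh t^2) / t := by
    rw [← hinv]
    field_simp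
  rw [hA, hinv, show Real.exp (-4*t) = Real.exp (-(4*t)) by ring_nf]
  field_simp
  ring

lemma sumS_sub {N : ℕ} (hN : 1 ≤ N) (C : ℝ)
    (hC : C = -(1 / 4) *
      ∫ t in Set.Ioi (0 : ℝ), (1 / t) * (Real.exp (-4 * t) - 1 / Real.cosh t ^ 2)) :
    (∑ k ∈ Finset.Icc 1 N, S k) - (1/4) * Real.log N - C
      = (1/4) * ∫ t in Set.Ioi (0:ℝ), Real.exp (-(4*(N:ℝ)*t)) * Real.tanh t^2 / t := by
  have hN1 : (1:ℝ) ≤ (N:ℝ) := by exact_mod_cast hN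
  have hlog : Real.log (N:ℝ)
      = ∫ t in Set.Ioi (0:ℝ), (Real.exp (-(4*t)) - Real.exp (-(4*(N:ℝ)*t)))/t := by
    have hfr := frullani (a := (4:ℝ)) (b := 4*(N:ℝ)) (by norm_num) (by nlinarith)
    rw [hfr, Real.log_mul (by norm_num) (by linarith)]
    ring
  have intFr : IntegrableOn
      (fun t => (Real.exp (-(4*t)) - Real.exp (-(4*(N:ℝ)*t)))/t) (Set.Ioi 0) :=
    frullani_integrableOn (by norm_num) (by nlinarith)
  have e1 : (∫ t in Set.Ioi (0:ℝ), ((1 - Real.exp (-(4*(N:ℝ)*t))) / (t * Real.cosh t^2)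
        - (Real.exp (-(4*t)) - Real.exp (-(4*(N:ℝ)*t)))/t
        + (1/t) * (Real.exp (-4*t) - 1/Real.cosh t^2)))
      = ∫ t in Set.Ioi (0:ℝ), Real.exp (-(4*(N:ℝ)*t)) * Real.tanh t^2 / t :=
    setIntegral_congr_fun measurableSet_Ioi (fun t ht => key_pointwise (Set.mem_Ioi.1 ht))
  have e2 := integral_add ((intA N).sub intFr) intC
  have e3 := integral_sub (intA N) intFr
  simp only [Pi.sub_apply] at e2 e3
  have comb : (∫ t in Set.Ioi (0:ℝ), (1 - Real.exp (-(4*(N:ℝ)*t))) / (t * Real.cosh t^2))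
      - (∫ t in Set.Ioi (0:ℝ), (Real.exp (-(4*t)) - Real.exp (-(4*(N:ℝ)*t)))/t)
      + (∫ t in Set.Ioi (0:ℝ), (1/t) * (Real.exp (-4*t) - 1/Real.cosh t^2))
      = ∫ t in Set.Ioi (0:ℝ), Real.exp (-(4*(N:ℝ)*t)) * Real.tanh t^2 / t := by
    rw [← e3, ← e2, e1]
  rw [sumS_eq_integral', hC]
  linarith [comb]

lemma subst_D {N : ℕ} (hN : 1 ≤ N) :
    ∫ t in Set.Ioi (0:ℝ), Real.exp (-(4*(N:ℝ)*t)) * Real.tanh t^2 / t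
      = ∫ u in Set.Ioi (0:ℝ), Real.exp (-u) * Real.tanh (u/(4*(N:ℝ)))^2 / u := by
  have hN1 : (1:ℝ) ≤ (N:ℝ) := by exact_mod_cast hN
  have hc : (0:ℝ) < 4*(N:ℝ) := by linarith
  set g : ℝ → ℝ := fun u => Real.exp (-u) * Real.tanh (u/(4*(N:ℝ)))^2 / u with hg
  have key := integral_comp_mul_left_Ioi g 0 hc
  simp only [mul_zero] at key
  have congr1 : ∫ t in Set.Ioi (0:ℝ), Real.exp (-(4*(N:ℝ)*t)) * Real.tanh t^2 / t
      = ∫ t in Set.Ioi (0:ℝ), (4*(N:ℝ)) * g ((4*(N:ℝ))*t) := by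
    apply setIntegral_congr_fun measurableSet_Ioi
    intro t ht
    have ht0 : (0:ℝ) < t := ht
    simp only [hg]
    rw [show (4*(N:ℝ)*t)/(4*(N:ℝ)) = t by field_simp]
    field_simp
  rw [congr1, MeasureTheory.integral_const_mul, key, smul_eq_mul]
  field_simp

lemma exp_mul_integrable : IntegrableOn (fun u => Real.exp (-u) * u) (Set.Ioi 0) := by
  have h := Real.GammaIntegral_convergent (show (0:ℝ) < 2 by norm_num)
  apply h.congr_fun _ measurableSet_Ioi
  intro x hx
  simp
  rw [show (2:ℝ)-1 = 1 by norm_num, Real.rpow_one]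

lemma exp_mul_integral : ∫ u in Set.Ioi (0:ℝ), Real.exp (-u) * u = 1 := by
  have h2 : Real.Gamma 2 = 1 := by
    rw [show (2:ℝ) = 1 + 1 by norm_num, Real.Gamma_add_one one_ne_zero, Real.Gamma_one]
    norm_num
  have h := Real.Gamma_eq_integral (show (0:ℝ) < 2 by norm_num)
  rw [h2] at h
  have h' : ∫ x in Set.Ioi (0:ℝ), Real.exp (-x) * x ^ ((2:ℝ)-1)
      = ∫ u in Set.Ioi (0:ℝ), Real.exp (-u) * u := by
    apply setIntegral_congr_fun measurableSet_Ioi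
    intro x hx
    simp
    rw [show (2:ℝ)-1 = 1 by norm_num, Real.rpow_one]
  rw [← h', ← h]

lemma hasDerivAt_tanh0 : HasDerivAt Real.tanh 1 0 := by
  have h := (Real.hasDerivAt_sinh 0).div (Real.hasDerivAt_cosh 0)
    (by rw [Real.cosh_zero]; norm_num)
  simp only [Real.sinh_zero, Real.cosh_zero] at h
  norm_num at h
  have heq : Real.tanh = fun x => Real.sinh x / Real.cosh x := funext Real.tanh_eq_sinh_div_cosh
  rw [heq]
  exact h

lemma tanh_slope : Tendsto (fun x => Real.tanh x / x) (𝓝[≠] (0:ℝ)) (𝓝 1) := by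
  have h := hasDerivAt_iff_tendsto_slope.1 hasDerivAt_tanh0
  apply h.congr
  intro x
  rw [slope_def_field, Real.tanh_zero]
  ring

lemma F_tendsto : Tendsto (fun N : ℕ => ∫ u in Set.Ioi (0:ℝ),
      ((N:ℝ)^2/4) * (Real.exp (-u) * Real.tanh (u/(4*(N:ℝ)))^2 / u)) atTop
    (𝓝 (1/64)) := by
  have hval : ∫ u in Set.Ioi (0:ℝ), Real.exp (-u) * u / 64 = 1/64 := by
    rw [integral_div, exp_mul_integral]
  rw [show (1/64 : ℝ) = ∫ u in Set.Ioi (0:ℝ), Real.exp (-u) * u / 64 from hval.symm]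
  apply MeasureTheory.tendsto_integral_of_dominated_convergence
    (bound := fun u => Real.exp (-u) * u / 64)
  · intro N
    apply ContinuousOn.aestronglyMeasurable _ measurableSet_Ioi
    apply ContinuousOn.mul continuousOn_const
    apply ContinuousOn.div _ continuousOn_id (fun x hx => ne_of_gt hx)
    exact ((Real.continuous_exp.comp continuous_neg).mul
      ((continuous_tanh.comp (continuous_id.div_const _)).pow 2)).continuousOn
  · exact exp_mul_integrable.div_const 64
  · intro N
    filter_upwards [ae_restrict_mem measurableSet_Ioi] with u hu
    have hu0 : (0:ℝ) < u := hu
    rcases Nat.eq_zero_or_pos N with rfl | hN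
    · simp only [Nat.cast_zero]
      norm_num
      positivity
    · have hNr : (0:ℝ) < (N:ℝ) := by exact_mod_cast hN
      have hx0 : (0:ℝ) ≤ u/(4*(N:ℝ)) := by positivity
      have h1 : Real.tanh (u/(4*(N:ℝ)))^2 ≤ (u/(4*(N:ℝ)))^2 := by
        have := tanh_le_self hx0
        have := tanh_nonneg hx0
        nlinarith
      have hFnn : 0 ≤ ((N:ℝ)^2/4) * (Real.exp (-u) * Real.tanh (u/(4*(N:ℝ)))^2 / u) := by
        positivity
      rw [Real.norm_eq_abs, abs_of_nonneg hFnn]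
      calc ((N:ℝ)^2/4) * (Real.exp (-u) * Real.tanh (u/(4*(N:ℝ)))^2 / u)
          ≤ ((N:ℝ)^2/4) * (Real.exp (-u) * (u/(4*(N:ℝ)))^2 / u) := by gcongr
        _ = Real.exp (-u) * u / 64 := by field_simp; ring
  · filter_upwards [ae_restrict_mem measurableSet_Ioi] with u hu
    have hu0 : (0:ℝ) < u := hu
    have harg : Tendsto (fun N : ℕ => u/(4*(N:ℝ))) atTop (𝓝[≠] (0:ℝ)) := by
      rw [tendsto_nhdsWithin_iff]
      constructor
      · exact Tendsto.div_atTop tendsto_const_nhds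
          (tendsto_natCast_atTop_atTop.const_mul_atTop (by norm_num : (0:ℝ) < 4))
      · filter_upwards [eventually_ge_atTop 1] with N hN
        have hNr : (0:ℝ) < (N:ℝ) := by exact_mod_cast hN
        simp only [Set.mem_compl_iff, Set.mem_singleton_iff]
        positivity
    have hq := tanh_slope.comp harg
    have hlim : Tendsto (fun N : ℕ => (Real.exp (-u) * u / 64)
        * (Real.tanh (u/(4*(N:ℝ)))/(u/(4*(N:ℝ))))^2) atTop
        (𝓝 ((Real.exp (-u) * u / 64) * 1^2)) := by
      apply Tendsto.mul tendsto_const_nhds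
      exact (hq.pow 2)
    rw [one_pow, mul_one] at hlim
    apply hlim.congr'
    filter_upwards [eventually_ge_atTop 1] with N hN
    have hNr : (0:ℝ) < (N:ℝ) := by exact_mod_cast hN
    have hx0 : u/(4*(N:ℝ)) ≠ 0 := by positivity
    field_simp
    ring

end Stmt16

/-- Second-order asymptotics of `φ_N = -∑_{k=1}^N log(Γ(k)²/(Γ(k-1/2)Γ(k+1/2)))`:
with `C = -(1/4)∫_0^∞ (1/t)(e^{-4t} - cosh⁻²t) dt`, one has
`lim N²(φ_N - (1/4) log N - C) = 1/64`. -/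
theorem stmt16 (φ : ℕ → ℝ)
    (hφ : ∀ N : ℕ, φ N = -∑ k ∈ Finset.Icc 1 N,
      Real.log (Real.Gamma (k : ℝ) ^ 2 /
        (Real.Gamma ((k : ℝ) - 1 / 2) * Real.Gamma ((k : ℝ) + 1 / 2))))
    (C : ℝ)
    (hC : C = -(1 / 4) *
      ∫ t in Set.Ioi (0 : ℝ), (1 / t) * (Real.exp (-4 * t) - 1 / Real.cosh t ^ 2)) :
    Tendsto (fun N : ℕ => (N : ℝ) ^ 2 * (φ N - (1 / 4) * Real.log N - C)) atTop
      (nhds (1 / 64)) := by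
  have hsum : ∀ N : ℕ, φ N = ∑ k ∈ Finset.Icc 1 N, Stmt16.S k := by
    intro N
    rw [hφ N, ← Finset.sum_neg_distrib]
    apply Finset.sum_congr rfl
    intro k hk
    have hk1 : 1 ≤ k := (Finset.mem_Icc.1 hk).1
    obtain ⟨hg1, hg2, hg3⟩ := Stmt16.Gamma_pos_k hk1
    rw [Real.log_div (by positivity) (by positivity),
      Real.log_mul hg1.ne' hg2.ne', Real.log_pow, Stmt16.S]
    push_cast
    ring
  have key : ∀ᶠ N : ℕ in atTop, (∫ u in Set.Ioi (0:ℝ),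
      ((N:ℝ)^2/4) * (Real.exp (-u) * Real.tanh (u/(4*(N:ℝ)))^2 / u))
      = (N:ℝ)^2 * (φ N - (1/4) * Real.log N - C) := by
    filter_upwards [eventually_ge_atTop 1] with N hN
    rw [hsum, Stmt16.sumS_sub hN C hC, Stmt16.subst_D hN,
      MeasureTheory.integral_const_mul]
    ring
  exact Stmt16.F_tendsto.congr' key
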